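/- Let G be a finite connected multigraph with spanning tree T, let e' be an edge of G not in T, let ℓ be the fundamental path of e' in T, and let e be an edge of ℓ. Then the spanning tree (T \ {e}) ∪ {e'} can be obtained from T by a finite sequence of single-edge exchanges, each of which swaps one tree edge with one non-tree edge sharing a vertex with it while preserving the spanning tree property. -/

import Mathlib

/-- A finite multigraph on vertex type `V` with edge type `E`:
each edge has an unordered pair of endpoints (a loop has equal endpoints). -/
structure Multigraph (V E : Type) where
  ends : E → Sym2 V

namespace Multigraph

variable {V E : Type}

/-- Degree of a vertex: number of edge-ends at it (a loop counts twice). -/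
def deg [Fintype E] [DecidableEq V] (G : Multigraph V E) (v : V) : ℕ :=
  ∑ e : E, (if G.ends e = s(v, v) then 2 else if v ∈ G.ends e then 1 else 0)

/-- Degree of a vertex within a set of edges. -/
def degOn [DecidableEq V] (G : Multigraph V E) (S : Finset E) (v : V) : ℕ :=
  ∑ e ∈ S, (if G.ends e = s(v, v) then 2 else if v ∈ G.ends e then 1 else 0)

/-- Two vertices are joined by a walk using only edges in `S`. -/
def Reach (G : Multigraph V E) (S : Finset E) : V → V → Prop :=
  Relation.ReflTransGen (fun u w => ∃ e ∈ S, G.ends e = s(u, w))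

/-- A set of edges connects all the vertices of `G`. -/
def ConnectedOn (G : Multigraph V E) (S : Finset E) : Prop :=
  ∀ u v : V, G.Reach S u v

/-- `G` is connected (as a graph, using all its edges). -/
def Connected [Fintype E] (G : Multigraph V E) : Prop :=
  G.ConnectedOn Finset.univ

/-- A set of edges is acyclic iff every edge in it is a bridge: its endpoints
are not joined by a walk avoiding it.  (In particular it has no loops.) -/
def Acyclic [DecidableEq E] (G : Multigraph V E) (S : Finset E) : Prop :=
  ∀ e ∈ S, ∀ u w : V, G.ends e = s(u, w) → ¬ G.Reach (S.erase e) u w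

/-- A spanning tree: a connected acyclic spanning set of edges. -/
def IsSpanningTree [DecidableEq E] (G : Multigraph V E) (T : Finset E) : Prop :=
  G.ConnectedOn T ∧ G.Acyclic T

/-- `G` is 4-valent: every vertex has degree 4. -/
def IsFourValent [Fintype E] [DecidableEq V] (G : Multigraph V E) : Prop :=
  ∀ v : V, G.deg v = 4

lemma reach_symm (G : Multigraph V E) (S : Finset E) :
    Symmetric (G.Reach S) := by
  intro u w h
  induction h with
  | refl => exact Relation.ReflTransGen.refl
  | tail _ hst ih =>
    obtain ⟨e, he, hew⟩ := hst
    exact Relation.ReflTransGen.head ⟨e, he, hew.trans (Sym2.eq_swap)⟩ ih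

/-- Reachability through `S` as an equivalence relation on vertices. -/
def reachSetoid (G : Multigraph V E) (S : Finset E) : Setoid V :=
  ⟨G.Reach S, ⟨fun _ => Relation.ReflTransGen.refl,
    fun h => G.reach_symm S h, fun h h' => Relation.ReflTransGen.trans h h'⟩⟩

/-- Number of connected components of the subgraph with edge set `S`
(every vertex of `G` counts). -/
noncomputable def numComponents (G : Multigraph V E) (S : Finset E) : ℕ :=
  Nat.card (Quotient (G.reachSetoid S))

end Multigraph

namespace Multigraph

/-- `P` is the edge set of a simple path from `u` to `v`: either trivial
(`u = v`, no edges) or `u ≠ v`, with `u`, `v` of degree 1 in `P`, all other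
vertices of degree 0 or 2 in `P`, `P` acyclic and connected onto `u`. -/
def IsPath {V E : Type} [DecidableEq V] [DecidableEq E]
    (G : Multigraph V E) (P : Finset E) (u v : V) : Prop :=
  (u = v ∧ P = ∅) ∨
    (u ≠ v ∧ G.degOn P u = 1 ∧ G.degOn P v = 1 ∧
      (∀ w : V, w ≠ u → w ≠ v → G.degOn P w = 0 ∨ G.degOn P w = 2) ∧
      G.Acyclic P ∧ (∀ w : V, G.degOn P w ≠ 0 → G.Reach P u w))

/-- A single-edge exchange: replace a tree edge `a` by a non-tree edge `b`
sharing a vertex with it, the result being again a spanning tree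
(the move (m2) of the paper). -/
def ExchangeStep {V E : Type} [DecidableEq V] [DecidableEq E]
    (G : Multigraph V E) (T T' : Finset E) : Prop :=
  ∃ a b : E, ∃ w : V, a ∈ T ∧ b ∉ T ∧ w ∈ G.ends a ∧ w ∈ G.ends b ∧
    T' = insert b (T.erase a) ∧ G.IsSpanningTree T ∧ G.IsSpanningTree T'

end Multigraph


namespace Multigraph

variable {V E : Type} [DecidableEq V] [DecidableEq E]

set_option linter.unusedSectionVars false

lemma exists_ends (G : Multigraph V E) (g : E) : ∃ p q : V, G.ends g = s(p, q) :=
  Sym2.inductionOn (f := fun z => ∃ p q : V, z = s(p, q)) (G.ends g)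
    (fun p q => ⟨p, q, rfl⟩)

lemma reach_mono (G : Multigraph V E) {S S' : Finset E} (h : S ⊆ S') {x y : V}
    (hr : G.Reach S x y) : G.Reach S' x y :=
  Relation.ReflTransGen.mono (r := fun u w => ∃ e ∈ S, G.ends e = s(u, w))
    (p := fun u w => ∃ e ∈ S', G.ends e = s(u, w)) (fun _ _ ⟨f, hf, he⟩ => ⟨f, h hf, he⟩) _ _ hr

lemma reach_single (G : Multigraph V E) {S : Finset E} {f : E} {p q : V}
    (hf : f ∈ S) (h : G.ends f = s(p, q)) : G.Reach S p q :=
  Relation.ReflTransGen.single ⟨f, hf, h⟩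

lemma reach_insert_cases (G : Multigraph V E) {S : Finset E} {g : E} {x y : V}
    (h : G.Reach (insert g S) x y) :
    G.Reach S x y ∨ ∃ p q : V, G.ends g = s(p, q) ∧ G.Reach S x p ∧ G.Reach S q y := by
  induction h using Relation.ReflTransGen.head_induction_on with
  | refl => exact Or.inl .refl
  | @head a c hstep htail ih =>
    obtain ⟨h1, hm, hends⟩ := hstep
    rcases Finset.mem_insert.mp hm with rfl | hmS
    · rcases ih with r | ⟨p, q, hpq, r1, r2⟩
      · exact Or.inr ⟨a, c, hends, .refl, r⟩
      · rcases Sym2.eq_iff.mp (hends.symm.trans hpq) with ⟨ha, hc⟩ | ⟨ha, hc⟩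
        · exact Or.inr ⟨a, c, hends, .refl, hc ▸ r2⟩
        · exact Or.inl (ha ▸ r2)
    · rcases ih with r | ⟨p, q, hpq, r1, r2⟩
      · exact Or.inl (.head ⟨h1, hmS, hends⟩ r)
      · exact Or.inr ⟨p, q, hpq, .head ⟨h1, hmS, hends⟩ r1, r2⟩

lemma reach_replace (G : Multigraph V E) {S S' : Finset E} (f : E) {x y : V}
    (h : G.Reach S x y)
    (hdet : ∀ p q : V, G.ends f = s(p, q) → G.Reach S' p q)
    (hsub : ∀ g ∈ S, g ≠ f → g ∈ S') : G.Reach S' x y := by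
  induction h using Relation.ReflTransGen.head_induction_on with
  | refl => exact .refl
  | @head a c hstep htail ih =>
    obtain ⟨h1, hm, hends⟩ := hstep
    by_cases hgf : h1 = f
    · exact (hdet a c (hgf ▸ hends)).trans ih
    · exact .head ⟨h1, hsub h1 hm hgf, hends⟩ ih

lemma reach_erase_of_unique (G : Multigraph V E) {S : Finset E} {f : E} {u u1 : V}
    (huniq : ∀ g ∈ S, u ∈ G.ends g → g = f)
    (hf : G.ends f = s(u, u1)) (hne : u1 ≠ u) {x y : V}
    (h : G.Reach S x y) (hy : y ≠ u) :
    (x ≠ u → G.Reach (S.erase f) x y) ∧ (x = u → G.Reach (S.erase f) u1 y) := by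
  induction h using Relation.ReflTransGen.head_induction_on with
  | refl => exact ⟨fun _ => .refl, fun h => absurd h hy⟩
  | @head a c hstep htail ih =>
    obtain ⟨g, hg, hends⟩ := hstep
    constructor
    · intro hau
      by_cases hcu : c = u
      · subst hcu
        have hgf : g = f := huniq g hg (by rw [hends]; exact Sym2.mem_mk_right _ _)
        subst hgf
        rcases Sym2.eq_iff.mp (hends.symm.trans hf) with ⟨ha, _⟩ | ⟨ha, _⟩
        · exact absurd ha hau
        · exact ha ▸ ih.2 rfl
      · have hgf : g ≠ f := by
          rintro rfl
          rcases Sym2.eq_iff.mp (hends.symm.trans hf) with ⟨ha, _⟩ | ⟨_, hc⟩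
          · exact hau ha
          · exact hcu hc
        exact .head ⟨g, Finset.mem_erase.mpr ⟨hgf, hg⟩, hends⟩ (ih.1 hcu)
    · rintro rfl
      have hgf : g = f := huniq g hg (by rw [hends]; exact Sym2.mem_mk_left a c)
      subst hgf
      have hc : c = u1 := by
        rcases Sym2.eq_iff.mp (hends.symm.trans hf) with ⟨_, hc⟩ | ⟨hu1, hc⟩
        · exact hc
        · exact absurd hu1.symm hne
      subst hc
      exact ih.1 hne

lemma degOn_erase_add (G : Multigraph V E) {S : Finset E} {f : E} (hf : f ∈ S) (x : V) :
    G.degOn (S.erase f) x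
      + (if G.ends f = s(x, x) then 2 else if x ∈ G.ends f then 1 else 0)
      = G.degOn S x :=
  Finset.sum_erase_add _ _ hf

lemma contrib_eq (G : Multigraph V E) {f : E} {p q : V} (hpq : G.ends f = s(p, q))
    (hne : p ≠ q) (x : V) :
    (if G.ends f = s(x, x) then 2 else if x ∈ G.ends f then 1 else 0)
      = (if x = p then 1 else 0) + (if x = q then 1 else 0) := by
  rw [hpq]
  have hxx : ¬ (s(p, q) = s(x, x)) := by
    intro h
    rcases Sym2.eq_iff.mp h with ⟨h1, h2⟩ | ⟨h1, h2⟩ <;> exact hne (h1.trans h2.symm)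
  rw [if_neg hxx]
  simp only [Sym2.mem_iff]
  by_cases h1 : x = p
  · by_cases h2 : x = q
    · exact absurd (h1.symm.trans h2) hne
    · simp [h1, h2, hne, Ne.symm hne]
  · by_cases h2 : x = q <;> simp [h1, h2, hne, Ne.symm hne]

lemma not_mem_of_degOn_zero (G : Multigraph V E) {S : Finset E} {x : V}
    (h : G.degOn S x = 0) {f : E} (hf : f ∈ S) : x ∉ G.ends f := by
  intro hx
  have h0 := Finset.sum_eq_zero_iff.mp h f hf
  by_cases hl : G.ends f = s(x, x) <;> simp [hl, hx] at h0

lemma exists_unique_incident (G : Multigraph V E) {S : Finset E} {x : V}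
    (h : G.degOn S x = 1) :
    ∃ f ∈ S, x ∈ G.ends f ∧ G.ends f ≠ s(x, x) ∧ ∀ g ∈ S, x ∈ G.ends g → g = f := by
  classical
  set t : E → ℕ := fun f => if G.ends f = s(x, x) then 2 else if x ∈ G.ends f then 1 else 0
    with ht
  have hsum : ∑ f ∈ S, t f = 1 := h
  obtain ⟨f, hfS, hf0⟩ := Finset.exists_ne_zero_of_sum_ne_zero (by rw [hsum]; omega)
  have hle : t f ≤ 1 := hsum ▸ Finset.single_le_sum (fun i _ => Nat.zero_le _) hfS
  have hfl : G.ends f ≠ s(x, x) := by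
    intro hl
    have h2 : t f = 2 := by simp [ht, hl]
    omega
  have hxf : x ∈ G.ends f := by
    by_contra hx; simp [ht, hfl, hx] at hf0
  refine ⟨f, hfS, hxf, hfl, ?_⟩
  intro g hgS hxg
  by_contra hgf
  have hg1 : 1 ≤ t g := by
    simp only [ht]; split <;> simp [hxg]
  have hf1 : 1 ≤ t f := by
    simp only [ht]; split <;> simp [hxf]
  have hpair : t f + t g ≤ ∑ f ∈ S, t f := by
    have hss : ({f, g} : Finset E) ⊆ S := by
      intro z hz; rcases Finset.mem_insert.mp hz with rfl | hz
      · exact hfS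
      · exact (Finset.mem_singleton.mp hz) ▸ hgS
    calc t f + t g = ∑ z ∈ ({f, g} : Finset E), t z := by
          rw [Finset.sum_pair (Ne.symm hgf)]
      _ ≤ ∑ f ∈ S, t f := Finset.sum_le_sum_of_subset hss
  omega

lemma acyclic_mono (G : Multigraph V E) {S S' : Finset E} (hsub : S' ⊆ S)
    (h : G.Acyclic S) : G.Acyclic S' :=
  fun f hf p q hpq hr =>
    h f (hsub hf) p q hpq (G.reach_mono (Finset.erase_subset_erase _ hsub) hr)

lemma even_degOn_sum (G : Multigraph V E) (S : Finset E) (A : Finset V)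
    (hcl : ∀ g ∈ S, ∀ p q : V, G.ends g = s(p, q) → (p ∈ A ↔ q ∈ A)) :
    Even (∑ x ∈ A, G.degOn S x) := by
  unfold degOn
  rw [Finset.sum_comm]
  apply Finset.even_sum
  intro g hg
  obtain ⟨p, q, hpq⟩ := G.exists_ends g
  by_cases hl : p = q
  · subst hl
    have : ∀ x ∈ A, (if G.ends g = s(x, x) then 2 else if x ∈ G.ends g then 1 else 0)
        = (if x = p then 2 else 0) := by
      intro x _
      rw [hpq]
      by_cases h1 : x = p
      · subst h1; simp
      · have e1 : ¬ (s(p, p) = s(x, x)) := fun h => by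
          rcases Sym2.eq_iff.mp h with ⟨h2, _⟩ | ⟨h2, _⟩ <;> exact h1 h2.symm
        have e2 : x ∉ s(p, p) := by simp [Sym2.mem_iff, h1]
        rw [if_neg e1, if_neg e2, if_neg h1]
    rw [Finset.sum_congr rfl this]
    simp only [Finset.sum_ite_eq' A p (fun _ => 2)]
    split <;> simp
  · have hrw : ∀ x ∈ A, (if G.ends g = s(x, x) then 2 else if x ∈ G.ends g then 1 else 0)
        = (if x = p then 1 else 0) + (if x = q then 1 else 0) :=
      fun x _ => G.contrib_eq hpq hl x
    rw [Finset.sum_congr rfl hrw, Finset.sum_add_distrib]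
    simp only [Finset.sum_ite_eq' A, hcl g hg p q hpq]
    rcases em (q ∈ A) with h | h <;> simp [h]

lemma eq_empty_of_acyclic_even [Fintype V] (G : Multigraph V E) (S : Finset E)
    (hac : G.Acyclic S) (hev : ∀ x : V, Even (G.degOn S x)) : S = ∅ := by
  classical
  by_contra hne
  obtain ⟨f, hf⟩ := Finset.nonempty_iff_ne_empty.mpr hne
  obtain ⟨p, q, hpq⟩ := G.exists_ends f
  have hpq_ne : p ≠ q := by
    rintro rfl
    exact hac f hf p p hpq .refl
  have hnr : ¬ G.Reach (S.erase f) p q := hac f hf p q hpq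
  set A : Finset V := Finset.univ.filter (fun x => G.Reach (S.erase f) p x) with hA
  have hpA : p ∈ A := by simp [hA]; exact .refl
  have hqA : q ∉ A := by simp [hA]; exact hnr
  have hcl : ∀ g ∈ S.erase f, ∀ a b : V, G.ends g = s(a, b) → (a ∈ A ↔ b ∈ A) := by
    intro g hg a b hab
    simp only [hA, Finset.mem_filter, Finset.mem_univ, true_and]
    exact ⟨fun h => h.trans (G.reach_single hg hab),
      fun h => h.trans (G.reach_symm _ (G.reach_single hg hab))⟩
  have heven := G.even_degOn_sum (S.erase f) A hcl
  have hsum : ∑ x ∈ A, G.degOn S x = (∑ x ∈ A, G.degOn (S.erase f) x) + 1 := by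
    have hpt : ∀ x ∈ A, G.degOn S x
        = G.degOn (S.erase f) x + ((if x = p then 1 else 0) + (if x = q then 1 else 0)) := by
      intro x _
      rw [← G.degOn_erase_add hf x, G.contrib_eq hpq hpq_ne x]
    rw [Finset.sum_congr rfl hpt, Finset.sum_add_distrib, Finset.sum_add_distrib]
    simp only [Finset.sum_ite_eq' A]
    simp [hpA, hqA]
  have hEv : Even (∑ x ∈ A, G.degOn S x) := by
    apply Finset.even_sum
    intro x _
    exact hev x
  rw [hsum] at hEv
  obtain ⟨k, hk⟩ := heven
  obtain ⟨m, hm⟩ := hEv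
  omega

lemma path_tail [Fintype V] (G : Multigraph V E) {P : Finset E} {u v : V}
    (hP : G.IsPath P u v) (hne : u ≠ v) :
    ∃ f ∈ P, ∃ u1 : V, G.ends f = s(u, u1) ∧ u1 ≠ u ∧ G.IsPath (P.erase f) u1 v := by
  rcases hP with ⟨h, _⟩ | ⟨_, hdu, hdv, hint, hac, hreach⟩
  · exact absurd h hne
  obtain ⟨f, hfP, hxf, hfl, huniq⟩ := G.exists_unique_incident hdu
  obtain ⟨u1, hfu⟩ : ∃ u1 : V, G.ends f = s(u, u1) := by
    obtain ⟨p, q, hpq⟩ := G.exists_ends f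
    rcases Sym2.mem_iff.mp (hpq ▸ hxf) with rfl | rfl
    · exact ⟨q, hpq⟩
    · exact ⟨p, hpq.trans Sym2.eq_swap⟩
  have hu1ne : u1 ≠ u := by
    rintro rfl
    exact hfl hfu
  have hdP' : ∀ x : V, G.degOn P x
      = G.degOn (P.erase f) x + ((if x = u then 1 else 0) + (if x = u1 then 1 else 0)) := by
    intro x
    rw [← G.degOn_erase_add hfP x, G.contrib_eq hfu (Ne.symm hu1ne) x]
  have hd'u : G.degOn (P.erase f) u = 0 := by
    have h0 := hdP' u
    rw [hdu] at h0
    simp [Ne.symm hu1ne] at h0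
    omega
  by_cases hu1v : u1 = v
  · subst hu1v
    have hd'v : G.degOn (P.erase f) u1 = 0 := by
      have h0 := hdP' u1
      rw [hdv] at h0
      simp [hu1ne] at h0
      omega
    have hall : ∀ x : V, Even (G.degOn (P.erase f) x) := by
      intro x
      by_cases hxu : x = u
      · subst hxu; rw [hd'u]; exact Even.zero
      by_cases hxv : x = u1
      · subst hxv; rw [hd'v]; exact Even.zero
      · have h0 := hdP' x
        simp [hxu, hxv] at h0
        rcases hint x hxu hxv with h | h <;> rw [← h0, h] <;> simp
    have hP'e : P.erase f = ∅ :=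
      G.eq_empty_of_acyclic_even _ (G.acyclic_mono (Finset.erase_subset _ _) hac) hall
    exact ⟨f, hfP, u1, hfu, hu1ne, Or.inl ⟨rfl, hP'e⟩⟩
  · refine ⟨f, hfP, u1, hfu, hu1ne, Or.inr ⟨hu1v, ?_, ?_, ?_,
      G.acyclic_mono (Finset.erase_subset _ _) hac, ?_⟩⟩
    · have h0 := hdP' u1
      simp [hu1ne] at h0
      rcases hint u1 hu1ne hu1v with h | h <;> rw [h] at h0 <;> omega
    · have h0 := hdP' v
      rw [hdv] at h0
      simp [Ne.symm hne, Ne.symm (fun h => hu1v h : u1 = v → False)] at h0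
      omega
    · intro w hwu1 hwv
      by_cases hwu : w = u
      · subst hwu; exact Or.inl hd'u
      · have h0 := hdP' w
        simp [hwu, hwu1] at h0
        rcases hint w hwu hwv with h | h <;> rw [h] at h0 <;> omega
    · intro w hw
      have hwP : G.degOn P w ≠ 0 := by
        have h0 := hdP' w
        omega
      have hwu : w ≠ u := by
        rintro rfl
        exact hw hd'u
      have hr := hreach w hwP
      rcases hr.cases_head with heq | ⟨c, ⟨g, hgP, hgends⟩, htl⟩
      · exact absurd heq.symm hwu
      · have hgf : g = f := huniq g hgP (by rw [hgends]; exact Sym2.mem_mk_left _ _)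
        subst hgf
        have hc : c = u1 := by
          rcases Sym2.eq_iff.mp (hgends.symm.trans hfu) with ⟨_, hc⟩ | ⟨hu1, hc⟩
          · exact hc
          · exact absurd hu1.symm hu1ne
        subst hc
        exact (G.reach_erase_of_unique huniq hfu hu1ne htl hwu).1 hu1ne

/-- `L` is a list of edges forming a walk from `x` to `y`. -/
def WalkList (G : Multigraph V E) : V → List E → V → Prop
  | x, [], y => x = y
  | x, f :: L, y => ∃ w, G.ends f = s(x, w) ∧ WalkList G w L y

lemma walkList_reach (G : Multigraph V E) {S : Finset E} :
    ∀ {L : List E} {x y : V}, G.WalkList x L y → (∀ f ∈ L, f ∈ S) → G.Reach S x y := by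
  intro L
  induction L with
  | nil => intro x y h _; exact h ▸ .refl
  | cons f L ih =>
    intro x y h hsub
    obtain ⟨w, hf, hw⟩ := h
    exact .head ⟨f, hsub f (List.mem_cons_self), hf⟩
      (ih hw (fun g hg => hsub g (List.mem_cons_of_mem _ hg)))

lemma walkList_append (G : Multigraph V E) {A B : List E} :
    ∀ {x y : V}, G.WalkList x (A ++ B) y → ∃ w, G.WalkList x A w ∧ G.WalkList w B y := by
  induction A with
  | nil => intro x y h; exact ⟨x, rfl, h⟩
  | cons f A ih =>
    intro x y h
    obtain ⟨w, hf, hw⟩ := h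
    obtain ⟨w', h1, h2⟩ := ih hw
    exact ⟨w', ⟨w, hf, h1⟩, h2⟩

lemma path_toList [Fintype V] (G : Multigraph V E) :
    ∀ (n : ℕ) (P : Finset E) (u v : V), P.card ≤ n → G.IsPath P u v →
      ∃ L : List E, L.Nodup ∧ L.toFinset = P ∧ G.WalkList u L v := by
  intro n
  induction n with
  | zero =>
    intro P u v hc hP
    have hPe : P = ∅ := Finset.card_eq_zero.mp (Nat.le_antisymm hc (Nat.zero_le _))
    subst hPe
    rcases hP with ⟨rfl, _⟩ | ⟨_, hdu, _⟩
    · exact ⟨[], List.nodup_nil, by simp, rfl⟩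
    · simp [degOn] at hdu
  | succ n ih =>
    intro P u v hc hP
    by_cases huv : u = v
    · subst huv
      rcases hP with ⟨_, rfl⟩ | ⟨h, _⟩
      · exact ⟨[], List.nodup_nil, by simp, rfl⟩
      · exact absurd rfl h
    · obtain ⟨f, hf, u1, hfu, _, hP'⟩ := G.path_tail hP huv
      have hcard : (P.erase f).card ≤ n := by
        have := Finset.card_erase_of_mem hf
        have hpos : 0 < P.card := Finset.card_pos.mpr ⟨f, hf⟩
        omega
      obtain ⟨L, hnd, hLf, hw⟩ := ih (P.erase f) u1 v hcard hP'
      refine ⟨f :: L, ?_, ?_, u1, hfu, hw⟩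
      · refine List.nodup_cons.mpr ⟨?_, hnd⟩
        intro hfL
        exact (Finset.notMem_erase f P) (hLf ▸ List.mem_toFinset.mpr hfL)
      · rw [List.toFinset_cons, hLf, Finset.insert_erase hf]

lemma swap_spanning (G : Multigraph V E) {T : Finset E} (hT : G.IsSpanningTree T)
    {e' : E} (he' : e' ∉ T) {u v : V} (hends : G.ends e' = s(u, v))
    {L : List E} (hnd : L.Nodup) (hLT : ∀ g ∈ L, g ∈ T) (hw : G.WalkList u L v)
    {f : E} (hf : f ∈ L) :
    G.IsSpanningTree (insert e' (T.erase f)) := by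
  obtain ⟨L1, L2, rfl⟩ := List.append_of_mem hf
  obtain ⟨w1, hw1, hw2'⟩ := G.walkList_append hw
  obtain ⟨w2, hfw, hw2⟩ := hw2'
  have hfT : f ∈ T := hLT f hf
  have hfe' : f ≠ e' := fun h => he' (h ▸ hfT)
  obtain ⟨hndL1, hndc, hdisj⟩ := List.nodup_append'.mp hnd
  have hfL1 : f ∉ L1 := fun h => hdisj h (List.mem_cons_self)
  have hfL2 : f ∉ L2 := (List.nodup_cons.mp hndc).1
  have hsub1 : ∀ g ∈ L1, g ∈ T.erase f := fun g hg =>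
    Finset.mem_erase.mpr ⟨fun h => hfL1 (h ▸ hg),
      hLT g (List.mem_append_left _ hg)⟩
  have hsub2 : ∀ g ∈ L2, g ∈ T.erase f := fun g hg =>
    Finset.mem_erase.mpr ⟨fun h => hfL2 (h ▸ hg),
      hLT g (List.mem_append_right _ (List.mem_cons_of_mem _ hg))⟩
  have hr1 : G.Reach (T.erase f) u w1 := G.walkList_reach hw1 hsub1
  have hr2 : G.Reach (T.erase f) w2 v := G.walkList_reach hw2 hsub2
  have hkey : ¬ G.Reach (T.erase f) u v := by
    intro h
    exact hT.2 f hfT w1 w2 hfw ((G.reach_symm _ hr1).trans (h.trans (G.reach_symm _ hr2)))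
  have herase_sub : T.erase f ⊆ insert e' (T.erase f) := Finset.subset_insert _ _
  have he'T1 : e' ∈ insert e' (T.erase f) := Finset.mem_insert_self _ _
  constructor
  · intro x y
    refine G.reach_replace f (hT.1 x y) ?_ ?_
    · intro p q hpq
      have hww : G.Reach (insert e' (T.erase f)) w1 w2 :=
        (G.reach_symm _ (G.reach_mono herase_sub hr1)).trans
          ((G.reach_single he'T1 hends).trans
            (G.reach_symm _ (G.reach_mono herase_sub hr2)))
      rcases Sym2.eq_iff.mp (hfw.symm.trans hpq) with ⟨hp, hq⟩ | ⟨hp, hq⟩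
      · exact hp ▸ hq ▸ hww
      · exact hp ▸ hq ▸ (G.reach_symm _ hww)
    · intro g hg hgf
      exact herase_sub (Finset.mem_erase.mpr ⟨hgf, hg⟩)
  · intro g hg a b hab hr
    rcases Finset.mem_insert.mp hg with rfl | hgT
    · rw [Finset.erase_insert (fun h => he' (Finset.mem_erase.mp h).2)] at hr
      rcases Sym2.eq_iff.mp (hends.symm.trans hab) with ⟨hp, hq⟩ | ⟨hp, hq⟩
      · exact hkey (hp ▸ hq ▸ hr)
      · exact hkey (hp ▸ hq ▸ (G.reach_symm _ hr))
    · have hgf : g ≠ f := (Finset.mem_erase.mp hgT).1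
      have hgT' : g ∈ T := (Finset.mem_erase.mp hgT).2
      have hge' : g ≠ e' := fun h => he' (h ▸ hgT')
      rw [Finset.erase_insert_of_ne (Ne.symm hge')] at hr
      have hS0 : (T.erase f).erase g ⊆ T.erase f := Finset.erase_subset _ _
      rcases G.reach_insert_cases hr with h0 | ⟨p, q, hpq, rp, rq⟩
      · refine hT.2 g hgT' a b hab (G.reach_mono ?_ h0)
        intro z hz
        have h1 := Finset.mem_erase.mp hz
        have h2 := Finset.mem_erase.mp h1.2
        exact Finset.mem_erase.mpr ⟨h1.1, h2.2⟩
      · have hgTf : g ∈ T.erase f := hgT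
        have hreach_pq : G.Reach (T.erase f) p q :=
          (G.reach_symm _ (G.reach_mono hS0 rp)).trans
            ((G.reach_single hgTf hab).trans
              (G.reach_symm _ (G.reach_mono hS0 rq)))
        rcases Sym2.eq_iff.mp (hends.symm.trans hpq) with ⟨hp, hq⟩ | ⟨hp, hq⟩
        · exact hkey (hp ▸ hq ▸ hreach_pq)
        · exact hkey (hp ▸ hq ▸ (G.reach_symm _ hreach_pq))

lemma insert_erase_swap {T : Finset E} {g f e' : E} (hgT : g ∈ T) (hfg : f ≠ g)
    (hfe' : f ≠ e') (hge' : g ≠ e') :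
    insert g ((insert e' (T.erase g)).erase f) = insert e' (T.erase f) := by
  ext x
  simp only [Finset.mem_insert, Finset.mem_erase]
  constructor
  · rintro (rfl | ⟨hxf, (rfl | ⟨hxg, hxT⟩)⟩)
    · exact Or.inr ⟨Ne.symm hfg, hgT⟩
    · exact Or.inl rfl
    · exact Or.inr ⟨hxf, hxT⟩
  · rintro (rfl | ⟨hxf, hxT⟩)
    · exact Or.inr ⟨Ne.symm hfe', Or.inl rfl⟩
    · by_cases hxg : x = g
      · exact Or.inl hxg
      · exact Or.inr ⟨hxf, Or.inr ⟨hxg, hxT⟩⟩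

lemma chain_aux [Fintype V] (G : Multigraph V E) {T : Finset E}
    (hT : G.IsSpanningTree T) {e' : E} (he' : e' ∉ T)
    {u v : V} (hends : G.ends e' = s(u, v)) {L : List E} (hnd : L.Nodup)
    (hLT : ∀ g ∈ L, g ∈ T) (hw : G.WalkList u L v) {e : E} :
    ∀ (L2 : List E) (wg : V) (g : E) (pre : List E), L = pre ++ g :: L2 →
      wg ∈ G.ends g → G.WalkList wg L2 v → e ∈ g :: L2 →
      Relation.ReflTransGen G.ExchangeStep (insert e' (T.erase g)) (insert e' (T.erase e)) := by
  intro L2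
  induction L2 with
  | nil =>
    intro wg g pre hL hwg hwk he
    have : e = g := by simpa using he
    exact this ▸ .refl
  | cons f L2' ih =>
    intro wg g pre hL hwg hwk he
    by_cases heg : e = g
    · exact heg ▸ .refl
    · have heL : e ∈ f :: L2' := by
        rcases List.mem_cons.mp he with h | h
        · exact absurd h heg
        · exact h
      obtain ⟨w', hfw, hwk'⟩ := hwk
      have hgL : g ∈ L := by rw [hL]; exact List.mem_append_right _ (List.mem_cons_self)
      have hfL : f ∈ L := by
        rw [hL]
        exact List.mem_append_right _ (List.mem_cons_of_mem _ (List.mem_cons_self))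
      have hgT : g ∈ T := hLT g hgL
      have hfT : f ∈ T := hLT f hfL
      have hfg : f ≠ g := by
        have hnd2 : (g :: f :: L2').Nodup := (List.nodup_append'.mp (hL ▸ hnd)).2.1
        have := (List.nodup_cons.mp hnd2).1
        intro h
        exact this (h ▸ List.mem_cons_self)
      have hge' : g ≠ e' := fun h => he' (h ▸ hgT)
      have hfe' : f ≠ e' := fun h => he' (h ▸ hfT)
      have htree_g := G.swap_spanning hT he' hends hnd hLT hw hgL
      have htree_f := G.swap_spanning hT he' hends hnd hLT hw hfL
      have hstep : G.ExchangeStep (insert e' (T.erase g)) (insert e' (T.erase f)) := by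
        refine ⟨f, g, wg, ?_, ?_, ?_, hwg, ?_, htree_g, htree_f⟩
        · exact Finset.mem_insert_of_mem (Finset.mem_erase.mpr ⟨hfg, hfT⟩)
        · simp [Finset.mem_insert, Finset.mem_erase, hge']
        · rw [hfw]; exact Sym2.mem_mk_left _ _
        · exact (insert_erase_swap hgT hfg hfe' hge').symm
      refine Relation.ReflTransGen.head hstep (ih w' f (pre ++ [g]) ?_ ?_ hwk' heL)
      · rw [hL]; simp
      · rw [hfw]; exact Sym2.mem_mk_right _ _

end Multigraph

/-- The composite exchange `(T \ {e}) ∪ {e'}` along the fundamental path of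
`e'` can be realized as a finite sequence of single-edge exchanges, each
swapping a tree edge with an adjacent non-tree edge while preserving the
spanning tree property. -/
theorem stmt_3 {V E : Type} [Fintype V] [Fintype E] [DecidableEq V] [DecidableEq E]
    (G : Multigraph V E) (hconn : G.Connected)
    (T : Finset E) (hT : G.IsSpanningTree T)
    (e e' : E) (he : e ∈ T) (he' : e' ∉ T)
    (u v : V) (hends : G.ends e' = s(u, v))
    (P : Finset E) (hPT : P ⊆ T) (hP : G.IsPath P u v) (heP : e ∈ P) :
    Relation.ReflTransGen (G.ExchangeStep) T (insert e' (T.erase e)) := by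
  classical
  obtain ⟨L, hnd, hLP, hwL⟩ := G.path_toList P.card P u v le_rfl hP
  have hLT : ∀ g ∈ L, g ∈ T := fun g hg => hPT (hLP ▸ List.mem_toFinset.mpr hg)
  have heL : e ∈ L := by
    rw [← hLP] at heP
    exact List.mem_toFinset.mp heP
  cases L with
  | nil => exact absurd heL (List.not_mem_nil)
  | cons f1 L2 =>
    obtain ⟨w1, h1, hwk⟩ := hwL
    have hf1L : f1 ∈ f1 :: L2 := List.mem_cons_self
    have hf1T : f1 ∈ T := hLT f1 hf1L
    have htree1 := G.swap_spanning hT he' hends hnd hLT ⟨w1, h1, hwk⟩ hf1L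
    have hstep1 : G.ExchangeStep T (insert e' (T.erase f1)) :=
      ⟨f1, e', u, hf1T, he', by rw [h1]; exact Sym2.mem_mk_left _ _,
        by rw [hends]; exact Sym2.mem_mk_left _ _, rfl, hT, htree1⟩
    exact Relation.ReflTransGen.head hstep1
      (G.chain_aux hT he' hends hnd hLT ⟨w1, h1, hwk⟩ L2 w1 f1 [] rfl
        (by rw [h1]; exact Sym2.mem_mk_right _ _) hwk heL)
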